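/- There is no 5×5 additive-multiplicative magic square of distinct positive integers with magic product P whose center entry C (the entry in position (3,3)) satisfies P/C = p^s·q for distinct primes p and q and a positive integer s. -/

import Mathlib

/-- `A` is an `n × n` additive-multiplicative magic square of pairwise distinct
positive integers, with magic sum `S` and magic product `P`: every row, every
column, and both long diagonals have sum `S` and product `P`. -/
def IsAddMulMagicSquare (n : ℕ) (A : Fin n → Fin n → ℕ) (S P : ℕ) : Prop :=
  (∀ i j, 0 < A i j) ∧
  (Function.Injective fun c : Fin n × Fin n => A c.1 c.2) ∧
  (∀ i, ∑ j, A i j = S) ∧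
  (∀ j, ∑ i, A i j = S) ∧
  (∑ i, A i i = S) ∧
  (∑ i, A i i.rev = S) ∧
  (∀ i, ∏ j, A i j = P) ∧
  (∀ j, ∏ i, A i j = P) ∧
  (∏ i, A i i = P) ∧
  (∏ i, A i i.rev = P)

/-- Geometric sum bound: `1 + p + ⋯ + p^E < 2·p^E` (in the `+1 ≤` form). -/
lemma aux_geom (p : ℕ) (hp : 2 ≤ p) (E : ℕ) :
    (∑ i ∈ Finset.range (E + 1), p ^ i) + 1 ≤ 2 * p ^ E := by
  induction E with
  | zero => simp
  | succ E ih =>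
    rw [Finset.sum_range_succ]
    have h1 : 2 * p ^ E ≤ p ^ (E + 1) := by
      rw [pow_succ, mul_comm (p ^ E) p]
      exact Nat.mul_le_mul_right _ hp
    omega

/-- A finite set of distinct powers of `p`, all at most `X`, has sum `< 2X`. -/
lemma aux_pow_sum (p X : ℕ) (hp : 2 ≤ p) (hX : 1 ≤ X) (F : Finset ℕ)
    (hpow : ∀ x ∈ F, ∃ e, x = p ^ e) (hle : ∀ x ∈ F, x ≤ X) :
    F.sum id + 1 ≤ 2 * X := by
  have hX0 : X ≠ 0 := by omega
  set E := Nat.log p X with hE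
  have hsub : F ⊆ (Finset.range (E + 1)).image (p ^ ·) := by
    intro x hx
    obtain ⟨e, rfl⟩ := hpow x hx
    have hxle : p ^ e ≤ X := hle _ hx
    have he : e ≤ E := (Nat.le_log_iff_pow_le (by omega) hX0).mpr hxle
    exact Finset.mem_image.mpr ⟨e, Finset.mem_range.mpr (by omega), rfl⟩
  have h1 : F.sum id ≤ ((Finset.range (E + 1)).image (p ^ ·)).sum id :=
    Finset.sum_le_sum_of_subset hsub
  have h2 : ((Finset.range (E + 1)).image (p ^ ·)).sum id
      = ∑ i ∈ Finset.range (E + 1), p ^ i := by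
    rw [Finset.sum_image (fun a _ b _ hab => Nat.pow_right_injective hp hab)]
    simp
  have h3 := aux_geom p hp E
  have h4 : p ^ E ≤ X := Nat.pow_log_le_self p hX0
  omega

/-- A finite set of distinct numbers of the form `p^e * q`, all at most `X`,
has sum `< 2X`. -/
lemma aux_qpow_sum (p q X : ℕ) (hp : 2 ≤ p) (hq : 1 ≤ q) (hX : 1 ≤ X) (F : Finset ℕ)
    (hpow : ∀ x ∈ F, ∃ e, x = p ^ e * q) (hle : ∀ x ∈ F, x ≤ X) :
    F.sum id + 1 ≤ 2 * X := by
  rcases F.eq_empty_or_nonempty with rfl | ⟨x₀, hx₀⟩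
  · simp; omega
  obtain ⟨e₀, he₀⟩ := hpow x₀ hx₀
  have hqX : q ≤ X := by
    have := hle x₀ hx₀
    have h1 : 1 ≤ p ^ e₀ := Nat.one_le_pow _ _ (by omega)
    nlinarith
  have hXq0 : X / q ≠ 0 := by
    have := Nat.one_le_div_iff (by omega : 0 < q) |>.mpr hqX
    omega
  set E := Nat.log p (X / q) with hE
  have hsub : F ⊆ (Finset.range (E + 1)).image (fun e => p ^ e * q) := by
    intro x hx
    obtain ⟨e, rfl⟩ := hpow x hx
    have hxle : p ^ e * q ≤ X := hle _ hx
    have hdiv : p ^ e ≤ X / q := (Nat.le_div_iff_mul_le (by omega)).mpr hxle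
    have he : e ≤ E := (Nat.le_log_iff_pow_le (by omega) hXq0).mpr hdiv
    exact Finset.mem_image.mpr ⟨e, Finset.mem_range.mpr (by omega), rfl⟩
  have h1 : F.sum id ≤ ((Finset.range (E + 1)).image (fun e => p ^ e * q)).sum id :=
    Finset.sum_le_sum_of_subset hsub
  have h2 : ((Finset.range (E + 1)).image (fun e => p ^ e * q)).sum id
      = ∑ i ∈ Finset.range (E + 1), p ^ i * q := by
    rw [Finset.sum_image (fun a _ b _ hab =>
      Nat.pow_right_injective hp (Nat.eq_of_mul_eq_mul_right (by omega) hab))]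
    simp
  have h3 := aux_geom p hp E
  have h4 : p ^ E ≤ X / q := Nat.pow_log_le_self p hXq0
  have h5 : p ^ E * q ≤ X := (Nat.le_div_iff_mul_le (by omega)).mp h4
  have h6 : (∑ i ∈ Finset.range (E + 1), p ^ i * q)
      = (∑ i ∈ Finset.range (E + 1), p ^ i) * q := by
    rw [Finset.sum_mul]
  -- F.sum + 1 ≤ (∑ p^i) * q + 1 ≤ (2 p^E - 1) * q + 1 ≤ 2 p^E q - q + 1 ≤ 2X
  have h7 : (∑ i ∈ Finset.range (E + 1), p ^ i) * q + q ≤ 2 * (p ^ E * q) := by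
    calc (∑ i ∈ Finset.range (E + 1), p ^ i) * q + q
        = ((∑ i ∈ Finset.range (E + 1), p ^ i) + 1) * q := by ring
      _ ≤ (2 * p ^ E) * q := Nat.mul_le_mul_right _ h3
      _ = 2 * (p ^ E * q) := by ring
  omega

/-- A divisor of `p^s * q` (for distinct primes `p, q`) is either a power of
`p` or a power of `p` times `q`. -/
lemma aux_classify {p q : ℕ} (hp : p.Prime) (hq : q.Prime) (hpq : p ≠ q) {s x : ℕ}
    (hx : x ∣ p ^ s * q) : (∃ e, x = p ^ e) ∨ (∃ e, x = p ^ e * q) := by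
  obtain ⟨a, b, ha, hb, rfl⟩ := exists_dvd_and_dvd_of_dvd_mul hx
  obtain ⟨e, -, rfl⟩ := (Nat.dvd_prime_pow hp).mp ha
  rcases (Nat.Prime.eq_one_or_self_of_dvd hq b hb) with rfl | rfl
  · exact Or.inl ⟨e, by ring⟩
  · exact Or.inr ⟨e, rfl⟩

/-- There is no 5×5 additive-multiplicative magic square of distinct positive
integers whose center entry `C` satisfies `P / C = p^s * q` for distinct primes
`p, q` and `s ≥ 1`. -/
theorem no_five_square_with_center_prime_power_times_prime :
    ¬ ∃ (A : Fin 5 → Fin 5 → ℕ) (S P : ℕ) (p q s : ℕ),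
      IsAddMulMagicSquare 5 A S P ∧ p.Prime ∧ q.Prime ∧ p ≠ q ∧ 1 ≤ s ∧
      P = A 2 2 * (p ^ s * q) := by
  rintro ⟨A, S, P, p, q, s,
    ⟨hpos, hinj, hrow, hcol, hdiag, hanti, hprow, hpcol, hpdiag, hpanti⟩,
    hp, hq, hpq, hs, hPC⟩
  -- notation
  set C := A 2 2 with hC
  set N := p ^ s * q with hN
  have hC0 : 0 < C := hpos 2 2
  -- rev values
  have hrev0 : (0 : Fin 5).rev = 4 := by decide
  have hrev1 : (1 : Fin 5).rev = 3 := by decide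
  have hrev2 : (2 : Fin 5).rev = 2 := by decide
  have hrev3 : (3 : Fin 5).rev = 1 := by decide
  have hrev4 : (4 : Fin 5).rev = 0 := by decide
  -- the four line sums through the center
  have h1 : A 2 0 + A 2 1 + C + A 2 3 + A 2 4 = S := by
    have := hrow 2; rwa [Fin.sum_univ_five] at this
  have h2 : A 0 2 + A 1 2 + C + A 3 2 + A 4 2 = S := by
    have := hcol 2; rwa [Fin.sum_univ_five] at this
  have h3 : A 0 0 + A 1 1 + C + A 3 3 + A 4 4 = S := by
    have := hdiag; rwa [Fin.sum_univ_five] at this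
  have h4 : A 0 4 + A 1 3 + C + A 3 1 + A 4 0 = S := by
    have := hanti
    rwa [Fin.sum_univ_five, hrev0, hrev1, hrev2, hrev3, hrev4] at this
  -- the four line products through the center, with the center cancelled
  have hq1 : A 2 0 * A 2 1 * A 2 3 * A 2 4 = N := by
    have h := hprow 2; rw [Fin.prod_univ_five] at h
    refine Nat.eq_of_mul_eq_mul_left hC0 ?_
    calc C * (A 2 0 * A 2 1 * A 2 3 * A 2 4)
        = A 2 0 * A 2 1 * A 2 2 * A 2 3 * A 2 4 := by rw [hC]; ring
      _ = P := h
      _ = C * N := hPC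
  have hq2 : A 0 2 * A 1 2 * A 3 2 * A 4 2 = N := by
    have h := hpcol 2; rw [Fin.prod_univ_five] at h
    refine Nat.eq_of_mul_eq_mul_left hC0 ?_
    calc C * (A 0 2 * A 1 2 * A 3 2 * A 4 2)
        = A 0 2 * A 1 2 * A 2 2 * A 3 2 * A 4 2 := by rw [hC]; ring
      _ = P := h
      _ = C * N := hPC
  have hq3 : A 0 0 * A 1 1 * A 3 3 * A 4 4 = N := by
    have h := hpdiag; rw [Fin.prod_univ_five] at h
    refine Nat.eq_of_mul_eq_mul_left hC0 ?_
    calc C * (A 0 0 * A 1 1 * A 3 3 * A 4 4)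
        = A 0 0 * A 1 1 * A 2 2 * A 3 3 * A 4 4 := by rw [hC]; ring
      _ = P := h
      _ = C * N := hPC
  have hq4 : A 0 4 * A 1 3 * A 3 1 * A 4 0 = N := by
    have h := hpanti
    rw [Fin.prod_univ_five, hrev0, hrev1, hrev2, hrev3, hrev4] at h
    refine Nat.eq_of_mul_eq_mul_left hC0 ?_
    calc C * (A 0 4 * A 1 3 * A 3 1 * A 4 0)
        = A 0 4 * A 1 3 * A 2 2 * A 3 1 * A 4 0 := by rw [hC]; ring
      _ = P := h
      _ = C * N := hPC
  -- the 16 cells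
  set cells : List (Fin 5 × Fin 5) :=
    [(2,0),(2,1),(2,3),(2,4),(0,2),(1,2),(3,2),(4,2),
     (0,0),(1,1),(3,3),(4,4),(0,4),(1,3),(3,1),(4,0)] with hcells
  have hnodupc : cells.Nodup := by decide
  set L : List ℕ := cells.map (fun c => A c.1 c.2) with hLdef
  have hLnd : L.Nodup := hnodupc.map hinj
  have hLmem : ∀ x ∈ L, x ∣ N ∧ x + C + 3 ≤ S := by
    intro x hx
    have hx' : x = A 2 0 ∨ x = A 2 1 ∨ x = A 2 3 ∨ x = A 2 4 ∨
        x = A 0 2 ∨ x = A 1 2 ∨ x = A 3 2 ∨ x = A 4 2 ∨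
        x = A 0 0 ∨ x = A 1 1 ∨ x = A 3 3 ∨ x = A 4 4 ∨
        x = A 0 4 ∨ x = A 1 3 ∨ x = A 3 1 ∨ x = A 4 0 := by
      simpa [hLdef, hcells] using hx
    have p1 := hpos 2 0; have p2 := hpos 2 1; have p3 := hpos 2 3
    have p4 := hpos 2 4; have p5 := hpos 0 2; have p6 := hpos 1 2
    have p7 := hpos 3 2; have p8 := hpos 4 2; have p9 := hpos 0 0
    have p10 := hpos 1 1; have p11 := hpos 3 3; have p12 := hpos 4 4
    have p13 := hpos 0 4; have p14 := hpos 1 3; have p15 := hpos 3 1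
    have p16 := hpos 4 0
    rcases hx' with rfl|rfl|rfl|rfl|rfl|rfl|rfl|rfl|rfl|rfl|rfl|rfl|rfl|rfl|rfl|rfl
    · exact ⟨⟨A 2 1 * A 2 3 * A 2 4, by rw [← hq1]; ring⟩, by omega⟩
    · exact ⟨⟨A 2 0 * A 2 3 * A 2 4, by rw [← hq1]; ring⟩, by omega⟩
    · exact ⟨⟨A 2 0 * A 2 1 * A 2 4, by rw [← hq1]; ring⟩, by omega⟩
    · exact ⟨⟨A 2 0 * A 2 1 * A 2 3, by rw [← hq1]; ring⟩, by omega⟩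
    · exact ⟨⟨A 1 2 * A 3 2 * A 4 2, by rw [← hq2]; ring⟩, by omega⟩
    · exact ⟨⟨A 0 2 * A 3 2 * A 4 2, by rw [← hq2]; ring⟩, by omega⟩
    · exact ⟨⟨A 0 2 * A 1 2 * A 4 2, by rw [← hq2]; ring⟩, by omega⟩
    · exact ⟨⟨A 0 2 * A 1 2 * A 3 2, by rw [← hq2]; ring⟩, by omega⟩
    · exact ⟨⟨A 1 1 * A 3 3 * A 4 4, by rw [← hq3]; ring⟩, by omega⟩
    · exact ⟨⟨A 0 0 * A 3 3 * A 4 4, by rw [← hq3]; ring⟩, by omega⟩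
    · exact ⟨⟨A 0 0 * A 1 1 * A 4 4, by rw [← hq3]; ring⟩, by omega⟩
    · exact ⟨⟨A 0 0 * A 1 1 * A 3 3, by rw [← hq3]; ring⟩, by omega⟩
    · exact ⟨⟨A 1 3 * A 3 1 * A 4 0, by rw [← hq4]; ring⟩, by omega⟩
    · exact ⟨⟨A 0 4 * A 3 1 * A 4 0, by rw [← hq4]; ring⟩, by omega⟩
    · exact ⟨⟨A 0 4 * A 1 3 * A 4 0, by rw [← hq4]; ring⟩, by omega⟩
    · exact ⟨⟨A 0 4 * A 1 3 * A 3 1, by rw [← hq4]; ring⟩, by omega⟩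
  -- total sum of the 16 entries
  have hLsum : L.sum + 4 * C = 4 * S := by
    have : L.sum = A 2 0 + (A 2 1 + (A 2 3 + (A 2 4 + (A 0 2 + (A 1 2 + (A 3 2 +
        (A 4 2 + (A 0 0 + (A 1 1 + (A 3 3 + (A 4 4 + (A 0 4 + (A 1 3 + (A 3 1 +
        (A 4 0))))))))))))))) := by
      simp [hLdef, hcells]
    omega
  -- the bound X
  have hS : C + 4 ≤ S := by
    have := hpos 2 0; have := hpos 2 1; have := hpos 2 3; have := hpos 2 4
    omega
  set X := S - (C + 3) with hXdef
  have hXeq : X + C + 3 = S := by omega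
  have hX1 : 1 ≤ X := by omega
  -- turn the list into a finset and split it by divisibility by q
  set F : Finset ℕ := L.toFinset with hF
  have hFsum : F.sum id = L.sum := by
    rw [hF, List.sum_toFinset id hLnd, List.map_id]
  have hFmem : ∀ x ∈ F, x ∣ N ∧ x ≤ X := by
    intro x hx
    have := hLmem x (List.mem_toFinset.mp hx)
    exact ⟨this.1, by omega⟩
  have hp2 : 2 ≤ p := hp.two_le
  have hq1' : 1 ≤ q := hq.one_lt.le
  set F1 := F.filter (fun x => ¬ q ∣ x) with hF1
  set F2 := F.filter (fun x => q ∣ x) with hF2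
  have hsplit : F2.sum id + F1.sum id = F.sum id :=
    Finset.sum_filter_add_sum_filter_not F _ id
  have hb1 : F1.sum id + 1 ≤ 2 * X := by
    refine aux_pow_sum p X hp2 hX1 F1 ?_ ?_
    · intro x hx
      obtain ⟨hxF, hnq⟩ := Finset.mem_filter.mp hx
      rcases aux_classify hp hq hpq (hFmem x hxF).1 with h | ⟨e, rfl⟩
      · exact h
      · exact absurd (dvd_mul_left q (p ^ e)) hnq
    · intro x hx
      exact (hFmem x (Finset.mem_filter.mp hx).1).2
  have hb2 : F2.sum id + 1 ≤ 2 * X := by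
    refine aux_qpow_sum p q X hp2 hq1' hX1 F2 ?_ ?_
    · intro x hx
      obtain ⟨hxF, hdq⟩ := Finset.mem_filter.mp hx
      rcases aux_classify hp hq hpq (hFmem x hxF).1 with ⟨e, rfl⟩ | h
      · exfalso
        have : q ∣ p := hq.dvd_of_dvd_pow hdq
        exact hpq ((Nat.prime_dvd_prime_iff_eq hq hp).mp this).symm
      · exact h
    · intro x hx
      exact (hFmem x (Finset.mem_filter.mp hx).1).2
  -- final contradiction: 4X + 12 = L.sum = F.sum ≤ 4X - 2
  omega
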